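/- Let α_1 ∈ (1/2, 1) be irrational with continued fraction expansion [0; a_1, a_2, …] (so a_1 = 1) and suppose a_i > 1 for all i ≥ 2. Set α = (α_1, 1 − α_1) ∈ ℝ². Then for every N ≥ 2 and every 1 ≤ q ≤ ∞, one has 1 ≤ g_N(α, ℤ², ‖·‖_q) ≤ 2. -/

import Mathlib

open scoped BigOperators ENNReal NNReal

/-- Distance from a real number to the nearest integer (the torus norm on ℝ/ℤ). -/
noncomputable def nint (t : ℝ) : ℝ := |t - round t|

/-- The `L_q` distance (for `1 ≤ q ≤ ∞`) between two points of the torus `ℝ^d/ℤ^d`,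
computed on representatives in `ℝ^d`. -/
noncomputable def lqDist (q : ℝ≥0∞) {d : ℕ} (x y : Fin d → ℝ) : ℝ :=
  if q = ⊤ then ⨆ i, nint (x i - y i)
  else (∑ i, nint (x i - y i) ^ q.toReal) ^ (1 / q.toReal)

/-- The `n`-th point of the `d`-dimensional Kronecker sequence `z_n = nα + ℤ^d`
(as a representative in `ℝ^d`). -/
noncomputable def kron {d : ℕ} (α : Fin d → ℝ) (n : ℕ) : Fin d → ℝ :=
  fun c => (n : ℝ) * α c

/-- `L_q`-distance on the torus between the `i`-th and `j`-th points of the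
Kronecker sequence of `α`. -/
noncomputable def kronDist (q : ℝ≥0∞) {d : ℕ} (α : Fin d → ℝ) (i j : ℕ) : ℝ :=
  lqDist q (kron α i) (kron α j)

/-- The index `j ∈ {1, …, N} \ {i}` of the nearest neighbor of `z_i` in
`S_N = {z_1, …, z_N}` w.r.t. the `L_q` torus metric; ties are broken by taking
the largest such index. -/
noncomputable def nnIndex (q : ℝ≥0∞) {d : ℕ} (α : Fin d → ℝ) (N i : ℕ) : ℕ :=
  sSup {j : ℕ | j ∈ Finset.Icc 1 N ∧ j ≠ i ∧
    ∀ m ∈ Finset.Icc 1 N, m ≠ i → kronDist q α i j ≤ kronDist q α i m}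

/-- `h_i(N) = |j - i|` where `z_j` is the nearest neighbor of `z_i` in `S_N`:
the counting-metric distance of `z_i` to its nearest neighbor. -/
noncomputable def hFun (q : ℝ≥0∞) {d : ℕ} (α : Fin d → ℝ) (N i : ℕ) : ℕ :=
  Nat.dist (nnIndex q α N i) i

/-- `g_N(α, ℤ^d, ‖·‖_q)`: the number of distinct nearest neighbor distances
among `d_q(z_i, nn_1(z_i))`, `i = 1, …, N`. -/
noncomputable def gN (q : ℝ≥0∞) {d : ℕ} (α : Fin d → ℝ) (N : ℕ) : ℕ :=
  ((Finset.Icc 1 N).image (fun i => kronDist q α i (nnIndex q α N i))).card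

/-- The Gauss map `x ↦ {1/x}` generating the continued fraction expansion. -/
noncomputable def gaussMap (x : ℝ) : ℝ := Int.fract x⁻¹

/-- The partial quotients of the continued fraction expansion `[0; a_1, a_2, …]`
of an irrational `α ∈ (0,1)`: `a_n = ⌊1 / G^[n-1](α)⌋` (with `a_0 = 0`). -/
noncomputable def cfA (α : ℝ) : ℕ → ℕ
  | 0 => 0
  | n + 1 => (⌊(gaussMap^[n] α)⁻¹⌋).toNat

/-- The denominators of the convergents of the continued fraction of `α`:
`q_0 = 1`, `q_1 = a_1`, `q_n = a_n q_{n-1} + q_{n-2}`. -/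
noncomputable def cfQ (α : ℝ) : ℕ → ℕ
  | 0 => 1
  | 1 => cfA α 1
  | n + 2 => cfA α (n + 2) * cfQ α (n + 1) + cfQ α n

lemma nint_nonneg (t : ℝ) : 0 ≤ nint t := abs_nonneg _

lemma round_eq_of_abs_lt {t : ℝ} {m : ℤ} (h : |t - m| < 1/2) : round t = m := by
  rw [abs_lt] at h
  rw [round_eq, Int.floor_eq_iff]
  constructor
  · linarith [h.1]
  · push_cast
    linarith [h.2]

lemma nint_le (t : ℝ) (m : ℤ) : nint t ≤ |t - m| := by
  by_cases h : round t = m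
  · rw [nint, h]
  · have h1 : (1:ℝ) ≤ |(round t : ℝ) - m| := by
      have : round t - m ≠ 0 := sub_ne_zero.mpr h
      have := Int.one_le_abs this
      calc (1:ℝ) = ((1:ℤ):ℝ) := by norm_num
      _ ≤ ((|round t - m| : ℤ) : ℝ) := by exact_mod_cast this
      _ = |(round t : ℝ) - m| := by push_cast; ring_nf
    have h2 := abs_sub_round t
    have h3 : |(round t : ℝ) - m| ≤ |(round t:ℝ) - t| + |t - m| := abs_sub_le _ _ _
    have h4 : |(round t:ℝ) - t| = |t - round t| := abs_sub_comm _ _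
    rw [nint]
    linarith

lemma nint_eq_abs {t : ℝ} {m : ℤ} (h : |t - m| < 1/2) : nint t = |t - m| := by
  rw [nint, round_eq_of_abs_lt h]

lemma nint_add_int (t : ℝ) (m : ℤ) : nint (t + m) = nint t := by
  rw [nint, nint, round_add_intCast]
  congr 1
  push_cast
  ring

lemma nint_neg (t : ℝ) : nint (-t) = nint t := by
  apply le_antisymm
  · calc nint (-t) ≤ |(-t) - (-(round t) : ℤ)| := nint_le _ _
    _ = |t - round t| := by push_cast; rw [← abs_neg]; ring_nf
    _ = nint t := rfl
  · calc nint t ≤ |t - (-(round (-t)) : ℤ)| := nint_le _ _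
    _ = |(-t) - round (-t)| := by push_cast; rw [← abs_neg]; ring_nf
    _ = nint (-t) := rfl

lemma nint_natdist (θ : ℝ) (i j : ℕ) :
    nint ((i:ℝ)*θ - (j:ℝ)*θ) = nint ((Nat.dist i j : ℝ) * θ) := by
  rcases le_total j i with h | h
  · have : (i:ℝ)*θ - (j:ℝ)*θ = ((Nat.dist i j : ℝ)) * θ := by
      rw [Nat.dist_eq_sub_of_le_right h]
      push_cast [h]
      ring
    rw [this]
  · have : (i:ℝ)*θ - (j:ℝ)*θ = -(((Nat.dist i j : ℝ)) * θ) := by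
      rw [Nat.dist_eq_sub_of_le h]
      push_cast [h]
      ring
    rw [this, nint_neg]

noncomputable def tSeq (θ : ℝ) (n : ℕ) : ℝ := gaussMap^[n] θ

noncomputable def Bb (θ : ℝ) : ℕ → ℝ
  | 0 => 1
  | n+1 => Bb θ n * tSeq θ n

noncomputable def Qd (θ : ℝ) : ℕ → ℕ
  | 0 => 0
  | 1 => 1
  | n+2 => cfA θ (n+1) * Qd θ (n+1) + Qd θ n

noncomputable def Pd (θ : ℝ) : ℕ → ℤ
  | 0 => 1
  | 1 => 0
  | n+2 => cfA θ (n+1) * Pd θ (n+1) + Pd θ n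

section CF
variable {θ : ℝ} (hmem : θ ∈ Set.Ioo (1/2 : ℝ) 1) (hirr : Irrational θ)
include hmem hirr

lemma tSeq_mem : ∀ n, (tSeq θ n ∈ Set.Ioo (0:ℝ) 1 ∧ Irrational (tSeq θ n)) := by
  intro n
  induction n with
  | zero =>
    have h0 : tSeq θ 0 = θ := rfl
    rw [h0]
    exact ⟨⟨by linarith [hmem.1], hmem.2⟩, hirr⟩
  | succ n ih =>
    obtain ⟨⟨h0, h1⟩, hi⟩ := ih
    have hst : tSeq θ (n+1) = gaussMap (tSeq θ n) := Function.iterate_succ_apply' _ _ _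
    have hinv : Irrational (tSeq θ n)⁻¹ := hi.inv
    have hfr : Irrational (Int.fract (tSeq θ n)⁻¹) := by
      rw [Int.fract]
      exact hinv.sub_intCast _
    constructor
    · rw [hst, gaussMap]
      refine ⟨?_, Int.fract_lt_one _⟩
      rcases lt_or_eq_of_le (Int.fract_nonneg (tSeq θ n)⁻¹) with h | h
      · exact h
      · exact absurd (h ▸ hfr) (by simp [Irrational])
    · rw [hst, gaussMap]; exact hfr

lemma tSeq_inv_gt (n : ℕ) : 1 < (tSeq θ n)⁻¹ := by
  obtain ⟨⟨h0, h1⟩, _⟩ := tSeq_mem hmem hirr n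
  exact (one_lt_inv₀ h0).mpr h1

lemma cfA_succ_cast (n : ℕ) : ((cfA θ (n+1) : ℤ)) = ⌊(tSeq θ n)⁻¹⌋ := by
  have h1 : (1:ℤ) ≤ ⌊(tSeq θ n)⁻¹⌋ := by
    rw [Int.le_floor]; exact_mod_cast (tSeq_inv_gt hmem hirr n).le
  show ((⌊(gaussMap^[n] θ)⁻¹⌋).toNat : ℤ) = _
  rw [Int.toNat_of_nonneg (by exact le_trans (by norm_num) h1)]
  rfl

lemma cfA_succ_pos (n : ℕ) : 1 ≤ cfA θ (n+1) := by
  have := cfA_succ_cast hmem hirr n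
  have h1 : (1:ℤ) ≤ ⌊(tSeq θ n)⁻¹⌋ := by
    rw [Int.le_floor]; exact_mod_cast (tSeq_inv_gt hmem hirr n).le
  omega

lemma tSeq_succ (n : ℕ) : tSeq θ (n+1) = (tSeq θ n)⁻¹ - cfA θ (n+1) := by
  have hst : tSeq θ (n+1) = gaussMap (tSeq θ n) := Function.iterate_succ_apply' _ _ _
  rw [hst, gaussMap, Int.fract]
  congr 1
  exact_mod_cast (cfA_succ_cast hmem hirr n).symm

lemma Bb_pos (n : ℕ) : 0 < Bb θ n := by
  induction n with
  | zero => norm_num [Bb]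
  | succ n ih => exact mul_pos ih (tSeq_mem hmem hirr n).1.1

lemma Bb_succ_lt (n : ℕ) : Bb θ (n+1) < Bb θ n := by
  have h := (tSeq_mem hmem hirr n).1.2
  have hp := Bb_pos hmem hirr n
  calc Bb θ (n+1) = Bb θ n * tSeq θ n := rfl
  _ < Bb θ n * 1 := by exact mul_lt_mul_of_pos_left h hp
  _ = Bb θ n := mul_one _

lemma Bb_anti {m n : ℕ} (h : m ≤ n) : Bb θ n ≤ Bb θ m := by
  induction n with
  | zero => simp_all
  | succ n ih =>
    rcases Nat.lt_or_ge m (n+1) with h' | h'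
    · exact le_trans (Bb_succ_lt hmem hirr n).le (ih (by omega))
    · have : m = n + 1 := by omega
      subst this; rfl

omit hirr in
lemma cfA_one : cfA θ 1 = 1 := by
  have : ⌊θ⁻¹⌋ = 1 := by
    rw [Int.floor_eq_iff]
    constructor
    · push_cast
      rw [le_inv_comm₀ (by norm_num) (by linarith [hmem.1, hmem.2])]
      · linarith [hmem.2]
    · push_cast
      rw [inv_lt_comm₀ (by linarith [hmem.1]) (by norm_num)]
      linarith [hmem.1]
  show (⌊(gaussMap^[0] θ)⁻¹⌋).toNat = 1
  simp [this]

lemma Bb_two : Bb θ 2 = 1 - θ := by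
  have ht1 : tSeq θ 1 = θ⁻¹ - 1 := by
    have := tSeq_succ hmem hirr 0
    rw [cfA_one hmem] at this
    simpa [tSeq] using this
  have hθ : θ ≠ 0 := by intro h; rw [h] at hmem; norm_num at hmem
  show Bb θ 1 * tSeq θ 1 = 1 - θ
  have hb1 : Bb θ 1 = θ := by show Bb θ 0 * tSeq θ 0 = θ; simp [Bb, tSeq]
  rw [hb1, ht1]
  field_simp

lemma Bb_lt_half {n : ℕ} (h : 2 ≤ n) : Bb θ n < 1/2 := by
  calc Bb θ n ≤ Bb θ 2 := Bb_anti hmem hirr h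
  _ = 1 - θ := Bb_two hmem hirr
  _ < 1/2 := by linarith [hmem.1]

lemma EB : ∀ n : ℕ, (Qd θ n : ℝ) * θ - (Pd θ n : ℝ) = (-1)^(n+1) * Bb θ n := by
  have key : ∀ n : ℕ, ((Qd θ n : ℝ) * θ - (Pd θ n : ℝ) = (-1)^(n+1) * Bb θ n) ∧
      ((Qd θ (n+1) : ℝ) * θ - (Pd θ (n+1) : ℝ) = (-1)^(n+2) * Bb θ (n+1)) := by
    intro n
    induction n with
    | zero =>
      constructor
      · show ((0:ℕ):ℝ) * θ - ((1:ℤ):ℝ) = (-1)^1 * Bb θ 0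
        simp [Bb]
      · show ((1:ℕ):ℝ) * θ - ((0:ℤ):ℝ) = (-1)^2 * (Bb θ 0 * tSeq θ 0)
        simp [Bb, tSeq]
    | succ n ih =>
      obtain ⟨ih1, ih2⟩ := ih
      refine ⟨ih2, ?_⟩
      have htn := (tSeq_mem hmem hirr n).1.1
      have hBrec : Bb θ (n+2) = Bb θ n - (cfA θ (n+1) : ℝ) * Bb θ (n+1) := by
        have h1 : Bb θ (n+2) = Bb θ (n+1) * tSeq θ (n+1) := rfl
        have h2 : Bb θ (n+1) = Bb θ n * tSeq θ n := rfl
        rw [h1, tSeq_succ hmem hirr n, mul_sub, h2]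
        field_simp
      have hQ : (Qd θ (n+2) : ℝ) = (cfA θ (n+1) : ℝ) * (Qd θ (n+1) : ℝ) + (Qd θ n : ℝ) := by
        show ((cfA θ (n+1) * Qd θ (n+1) + Qd θ n : ℕ) : ℝ) = _
        push_cast; ring
      have hP : (Pd θ (n+2) : ℝ) = (cfA θ (n+1) : ℝ) * (Pd θ (n+1) : ℝ) + (Pd θ n : ℝ) := by
        show ((cfA θ (n+1) * Pd θ (n+1) + Pd θ n : ℤ) : ℝ) = _
        push_cast; ring
      rw [hQ, hP, hBrec]
      linear_combination ih1 + (cfA θ (n+1) : ℝ) * ih2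
  exact fun n => (key n).1

omit hmem hirr in
lemma detPQ : ∀ n : ℕ, Pd θ n * (Qd θ (n+1) : ℤ) - Pd θ (n+1) * (Qd θ n : ℤ) = (-1)^n := by
  intro n
  induction n with
  | zero => simp [Pd, Qd]
  | succ n ih =>
    have hQ : (Qd θ (n+2) : ℤ) = (cfA θ (n+1) : ℤ) * (Qd θ (n+1) : ℤ) + (Qd θ n : ℤ) := by
      show ((cfA θ (n+1) * Qd θ (n+1) + Qd θ n : ℕ) : ℤ) = _
      push_cast; ring
    have hP : Pd θ (n+2) = (cfA θ (n+1) : ℤ) * Pd θ (n+1) + Pd θ n := rfl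
    rw [hP, hQ]
    linear_combination (-1 : ℤ) * ih

lemma Qd_one_le : ∀ n : ℕ, 1 ≤ Qd θ (n+1) := by
  intro n
  induction n with
  | zero => simp [Qd]
  | succ n ih =>
    have ha := cfA_succ_pos hmem hirr n
    calc 1 ≤ cfA θ (n+1) * Qd θ (n+1) := Nat.one_le_iff_ne_zero.mpr (by positivity)
    _ ≤ cfA θ (n+1) * Qd θ (n+1) + Qd θ n := Nat.le_add_right _ _
    _ = Qd θ (n+2) := rfl

lemma Qd_mono_succ (n : ℕ) : Qd θ (n+1) ≤ Qd θ (n+2) := by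
  have ha := cfA_succ_pos hmem hirr n
  have h1 := Qd_one_le hmem hirr n
  calc Qd θ (n+1) = 1 * Qd θ (n+1) := (one_mul _).symm
  _ ≤ cfA θ (n+1) * Qd θ (n+1) := Nat.mul_le_mul_right _ ha
  _ ≤ cfA θ (n+1) * Qd θ (n+1) + Qd θ n := Nat.le_add_right _ _
  _ = Qd θ (n+2) := rfl

lemma Qd_mono {m n : ℕ} (h : m ≤ n) : Qd θ (m+1) ≤ Qd θ (n+1) := by
  induction n with
  | zero => simp_all
  | succ n ih =>
    rcases Nat.lt_or_ge m (n+1) with h' | h'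
    · exact le_trans (ih (by omega)) (Qd_mono_succ hmem hirr n)
    · have : m = n + 1 := by omega
      subst this; rfl

lemma Qd_lb : ∀ n : ℕ, n + 1 ≤ Qd θ (n+2) := by
  intro n
  induction n with
  | zero => simpa [Qd] using cfA_succ_pos hmem hirr 0
  | succ n ih =>
    have h1 := Qd_one_le hmem hirr n
    have ha : 1 ≤ cfA θ (n+2) := cfA_succ_pos hmem hirr (n+1)
    have : Qd θ (n+3) = cfA θ (n+2) * Qd θ (n+2) + Qd θ (n+1) := rfl
    calc n + 2 ≤ Qd θ (n+2) + Qd θ (n+1) := by omega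
    _ ≤ cfA θ (n+2) * Qd θ (n+2) + Qd θ (n+1) := by
        have := Nat.mul_le_mul_right (Qd θ (n+2)) ha
        omega
    _ = Qd θ (n+3) := rfl

omit hmem hirr in
lemma neg_one_sq_int (n : ℕ) : ((-1 : ℤ)^n) * ((-1 : ℤ)^n) = 1 := by
  rw [← pow_add]
  have : Even (n + n) := ⟨n, rfl⟩
  exact this.neg_one_pow

lemma best_approx (n : ℕ) (k : ℕ) (hk1 : 1 ≤ k) (hk2 : k < Qd θ (n+2)) (p : ℤ) :
    Bb θ (n+1) ≤ |(k:ℝ)*θ - (p:ℝ)| := by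
  set ε : ℤ := (-1)^n with hεdef
  have hε : ε * ε = 1 := neg_one_sq_int n
  set x : ℤ := ε * (Pd θ (n+2) * k - (Qd θ (n+2) : ℤ) * p) with hxdef
  set y : ℤ := ε * ((Qd θ (n+1) : ℤ) * p - Pd θ (n+1) * k) with hydef
  have hdet : Pd θ (n+1) * (Qd θ (n+2) : ℤ) - Pd θ (n+2) * (Qd θ (n+1) : ℤ) = -ε := by
    rw [hεdef]
    linear_combination detPQ (θ := θ) (n+1)
  have hk : (k : ℤ) = x * (Qd θ (n+1) : ℤ) + y * (Qd θ (n+2) : ℤ) := by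
    rw [hxdef, hydef]
    linear_combination (ε * (k : ℤ)) * hdet - (k : ℤ) * hε
  have hp : (p : ℤ) = x * Pd θ (n+1) + y * Pd θ (n+2) := by
    rw [hxdef, hydef]
    linear_combination (ε * (p : ℤ)) * hdet - (p : ℤ) * hε
  clear_value ε x y
  have hreal : (k:ℝ)*θ - (p:ℝ) =
      (x:ℝ) * ((Qd θ (n+1) : ℝ) * θ - (Pd θ (n+1) : ℝ)) +
      (y:ℝ) * ((Qd θ (n+2) : ℝ) * θ - (Pd θ (n+2) : ℝ)) := by
    have hkR : (k : ℝ) = (x:ℝ) * (Qd θ (n+1) : ℝ) + (y:ℝ) * (Qd θ (n+2) : ℝ) := by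
      exact_mod_cast congrArg (fun z : ℤ => (z : ℝ)) hk
    have hpR : (p : ℝ) = (x:ℝ) * (Pd θ (n+1) : ℝ) + (y:ℝ) * (Pd θ (n+2) : ℝ) := by
      exact_mod_cast congrArg (fun z : ℤ => (z : ℝ)) hp
    rw [hkR, hpR]; ring
  rw [EB hmem hirr (n+1), EB hmem hirr (n+2)] at hreal
  have hsign : (k:ℝ)*θ - (p:ℝ) = (-1:ℝ)^n * ((x:ℝ) * Bb θ (n+1) - (y:ℝ) * Bb θ (n+2)) := by
    rw [hreal]; ring
  have habs : |(k:ℝ)*θ - (p:ℝ)| = |(x:ℝ) * Bb θ (n+1) - (y:ℝ) * Bb θ (n+2)| := by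
    rw [hsign, abs_mul, abs_pow, abs_neg, abs_one, one_pow, one_mul]
  rw [habs]
  have hB1 := Bb_pos hmem hirr (n+1)
  have hB2 := Bb_pos hmem hirr (n+2)
  have hQ1 : (1 : ℤ) ≤ (Qd θ (n+1) : ℤ) := by exact_mod_cast Qd_one_le hmem hirr n
  have hQ2 : (k : ℤ) < (Qd θ (n+2) : ℤ) := by exact_mod_cast hk2
  have hk0 : (1 : ℤ) ≤ (k : ℤ) := by exact_mod_cast hk1
  rcases eq_or_ne y 0 with hy | hy
  · -- y = 0 : k = x * Qd(n+1), so |x| ≥ 1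
    rw [hy] at hk
    simp only [zero_mul, add_zero] at hk
    have hx : 1 ≤ x := by nlinarith
    have hx1 : (1:ℝ) ≤ (x:ℝ) := by exact_mod_cast hx
    have e1 : (1:ℝ) * Bb θ (n+1) ≤ (x:ℝ) * Bb θ (n+1) :=
      mul_le_mul_of_nonneg_right hx1 hB1.le
    have hyz : ((y:ℝ)) = 0 := by rw [hy]; norm_num
    rw [hyz, zero_mul, sub_zero, abs_of_pos (by linarith)]
    linarith
  · rcases eq_or_ne x 0 with hx | hx
    · -- x = 0 : k = y * Qd(n+2), impossible since 1 ≤ k < Qd(n+2)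
      exfalso
      rw [hx] at hk
      simp only [zero_mul, zero_add] at hk
      have hQ2' : (1 : ℤ) ≤ (Qd θ (n+2) : ℤ) := by
        exact_mod_cast Qd_one_le hmem hirr (n+1)
      rcases lt_trichotomy y 0 with h | h | h
      · nlinarith
      · exact hy h
      · nlinarith
    · -- x ≠ 0 and y ≠ 0 : opposite signs
      have hQ1' : (1 : ℤ) ≤ (Qd θ (n+2) : ℤ) := by
        exact_mod_cast Qd_one_le hmem hirr (n+1)
      have hopp : (1 ≤ x ∧ y ≤ -1) ∨ (x ≤ -1 ∧ 1 ≤ y) := by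
        rcases lt_trichotomy x 0 with h1 | h1 | h1
        · rcases lt_trichotomy y 0 with h2 | h2 | h2
          · exfalso; nlinarith
          · exact absurd h2 hy
          · right; omega
        · exact absurd h1 hx
        · rcases lt_trichotomy y 0 with h2 | h2 | h2
          · left; omega
          · exact absurd h2 hy
          · exfalso; nlinarith
      rcases hopp with ⟨h1, h2⟩ | ⟨h1, h2⟩
      · have h1R : (1:ℝ) ≤ (x:ℝ) := by exact_mod_cast h1
        have h2R : (y:ℝ) ≤ -1 := by exact_mod_cast h2
        have e1 : (1:ℝ) * Bb θ (n+1) ≤ (x:ℝ) * Bb θ (n+1) :=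
          mul_le_mul_of_nonneg_right h1R hB1.le
        have e2 : (y:ℝ) * Bb θ (n+2) ≤ (-1:ℝ) * Bb θ (n+2) :=
          mul_le_mul_of_nonneg_right h2R hB2.le
        rw [abs_of_pos (by linarith)]
        linarith
      · have h1R : (x:ℝ) ≤ -1 := by exact_mod_cast h1
        have h2R : (1:ℝ) ≤ (y:ℝ) := by exact_mod_cast h2
        have e1 : (x:ℝ) * Bb θ (n+1) ≤ (-1:ℝ) * Bb θ (n+1) :=
          mul_le_mul_of_nonneg_right h1R hB1.le
        have e2 : (1:ℝ) * Bb θ (n+2) ≤ (y:ℝ) * Bb θ (n+2) :=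
          mul_le_mul_of_nonneg_right h2R hB2.le
        rw [abs_of_neg (by linarith)]
        linarith

lemma nint_Qd (n : ℕ) : nint ((Qd θ (n+2) : ℝ) * θ) = Bb θ (n+2) := by
  have hE := EB hmem hirr (n+2)
  have hB := Bb_pos hmem hirr (n+2)
  have hhalf := Bb_lt_half hmem hirr (n := n+2) (by omega)
  have habs : |(Qd θ (n+2) : ℝ) * θ - (Pd θ (n+2) : ℝ)| = Bb θ (n+2) := by
    rw [hE, abs_mul, abs_pow, abs_neg, abs_one, one_pow, one_mul, abs_of_pos hB]
  rw [nint_eq_abs (m := Pd θ (n+2)) (by rw [habs]; exact hhalf), habs]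

end CF



noncomputable def idx (θ : ℝ) (M : ℕ) : ℕ := Nat.findGreatest (fun n => Qd θ (n+1) ≤ M) M

section IDX
variable {θ : ℝ} (hmem : θ ∈ Set.Ioo (1/2 : ℝ) 1) (hirr : Irrational θ)
include hmem hirr

omit hirr in
lemma Qd_two : Qd θ 2 = 1 := by
  show cfA θ 1 * Qd θ 1 + Qd θ 0 = 1
  rw [cfA_one hmem]
  simp [Qd]

omit hirr in
lemma idx_one_le {M : ℕ} (hM : 1 ≤ M) : 1 ≤ idx θ M := by
  unfold idx
  exact Nat.le_findGreatest hM (by rw [Qd_two hmem]; exact hM)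

omit hmem hirr in
lemma idx_le {M : ℕ} : idx θ M ≤ M := by
  unfold idx
  exact Nat.findGreatest_le M

omit hirr in
lemma idx_spec {M : ℕ} (hM : 1 ≤ M) : Qd θ (idx θ M + 1) ≤ M := by
  have h := Nat.findGreatest_spec (P := fun n => Qd θ (n+1) ≤ M) (m := 1) hM
    (by show Qd θ 2 ≤ M; rw [Qd_two hmem]; exact hM)
  exact h

lemma idx_gt {M : ℕ} (hM : 1 ≤ M) : M < Qd θ (idx θ M + 2) := by
  by_contra hcon
  push_neg at hcon
  have hub : idx θ M + 1 ≤ M := le_trans (Qd_lb hmem hirr (idx θ M)) hcon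
  exact Nat.findGreatest_is_greatest (P := fun n => Qd θ (n+1) ≤ M)
    (Nat.lt_succ_self _) hub hcon

omit hirr in
lemma idx_mono {M M' : ℕ} (hM : 1 ≤ M) (h : M ≤ M') : idx θ M ≤ idx θ M' := by
  conv_rhs => rw [idx]
  exact Nat.le_findGreatest (le_trans idx_le h) (le_trans (idx_spec hmem hM) h)

lemma min_ge {M k : ℕ} (hM : 1 ≤ M) (h1 : 1 ≤ k) (h2 : k ≤ M) :
    Bb θ (idx θ M + 1) ≤ nint ((k:ℝ)*θ) := by
  have h := best_approx hmem hirr (idx θ M) k h1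
    (lt_of_le_of_lt h2 (idx_gt hmem hirr hM)) (round ((k:ℝ)*θ))
  rw [nint]
  exact h

end IDX

lemma kronDist_eq (q : ℝ≥0∞) (hq : 1 ≤ q) (θ : ℝ) (i j : ℕ) :
    kronDist q ![θ, 1-θ] i j
      = (if q = ⊤ then 1 else (2:ℝ)^((1:ℝ)/q.toReal)) * nint ((Nat.dist i j : ℝ) * θ) := by
  have h0 : kron ![θ,1-θ] i 0 - kron ![θ,1-θ] j 0 = (i:ℝ)*θ - (j:ℝ)*θ := by
    simp [kron]
  have h1e : kron ![θ,1-θ] i 1 - kron ![θ,1-θ] j 1 = (i:ℝ)*(1-θ) - (j:ℝ)*(1-θ) := by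
    simp [kron]
  set c := nint ((Nat.dist i j : ℝ) * θ) with hc
  have hc0 : 0 ≤ c := nint_nonneg _
  have k0 : nint ((i:ℝ)*θ - (j:ℝ)*θ) = c := nint_natdist θ i j
  have k1 : nint ((i:ℝ)*(1-θ) - (j:ℝ)*(1-θ)) = c := by
    have he : (i:ℝ)*(1-θ) - (j:ℝ)*(1-θ) = (-((i:ℝ)*θ - (j:ℝ)*θ)) + (((i:ℤ) - (j:ℤ) : ℤ) : ℝ) := by
      push_cast; ring
    rw [he, nint_add_int, nint_neg, k0]
  rcases eq_or_ne q ⊤ with hT | hT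
  · rw [kronDist, lqDist, if_pos hT, if_pos hT, one_mul]
    have hfun : (fun c' : Fin 2 => nint (kron ![θ,1-θ] i c' - kron ![θ,1-θ] j c'))
        = fun _ => c := by
      funext c'
      fin_cases c'
      · simpa [kron] using k0
      · simpa [kron] using k1
    rw [hfun, ciSup_const]
  · have hq0 : q ≠ 0 := by
      intro h; rw [h] at hq; exact absurd hq (by simp)
    have hp : 0 < q.toReal := ENNReal.toReal_pos hq0 hT
    rw [kronDist, lqDist, if_neg hT, if_neg hT, Fin.sum_univ_two, h0, h1e, k0, k1]
    have h2 : c ^ q.toReal + c ^ q.toReal = 2 * c ^ q.toReal := by ring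
    rw [h2, Real.mul_rpow (by norm_num) (Real.rpow_nonneg hc0 _), ← Real.rpow_mul hc0,
      mul_one_div_cancel hp.ne', Real.rpow_one]

/-- For irrational `α_1 ∈ (1/2, 1)` with partial quotients `a_i > 1` for
all `i ≥ 2` and `α = (α_1, 1 - α_1)`, for every `N ≥ 2` and `1 ≤ q ≤ ∞` one has
`1 ≤ g_N(α, ℤ², ‖·‖_q) ≤ 2`. -/
theorem statement3 (α1 : ℝ) (hmem : α1 ∈ Set.Ioo (1/2 : ℝ) 1) (hirr : Irrational α1)
    (ha : ∀ i, 2 ≤ i → 1 < cfA α1 i)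
    (N : ℕ) (hN : 2 ≤ N) (q : ℝ≥0∞) (hq : 1 ≤ q) :
    1 ≤ gN q ![α1, 1 - α1] N ∧ gN q ![α1, 1 - α1] N ≤ 2 := by
  set K : ℝ := if q = ⊤ then 1 else (2:ℝ)^((1:ℝ)/q.toReal) with hK
  have hKpos : 0 < K := by
    rw [hK]
    split
    · norm_num
    · exact Real.rpow_pos_of_pos (by norm_num) _
  set α : Fin 2 → ℝ := ![α1, 1 - α1] with hα
  have hq0 : (1:ℕ) ≤ N/2 := by omega
  set n0 := idx α1 (N/2) with hn0
  have main : ∀ i ∈ Finset.Icc 1 N, ∃ n1, (n0 ≤ n1 ∧ n1 ≤ n0 + 1) ∧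
      kronDist q α i (nnIndex q α N i) = K * Bb α1 (n1 + 1) := by
    intro i hi
    rw [Finset.mem_Icc] at hi
    obtain ⟨hi1, hiN⟩ := hi
    set M := max (i - 1) (N - i) with hM
    have hM1 : 1 ≤ M := by
      rcases le_or_gt i (N/2) with h | h
      · exact le_trans (by omega) (le_max_right _ _)
      · exact le_trans (by omega) (le_max_left _ _)
    have hMN : M ≤ N - 1 := max_le (by omega) (by omega)
    have hMhalf : N/2 ≤ M := by
      rcases le_or_gt (N/2) (N - i) with h | h
      · exact le_trans h (le_max_right _ _)
      · exact le_trans (by omega) (le_max_left _ _)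
    set n1 := idx α1 M with hn1
    have hn11 : 1 ≤ n1 := idx_one_le hmem hM1
    have hlow : n0 ≤ n1 := idx_mono hmem hq0 hMhalf
    have hhigh : n1 ≤ n0 + 1 := by
      by_contra hcon
      push_neg at hcon
      have h2 : Qd α1 (n0 + 3) ≤ Qd α1 (n1 + 1) := by
        have := Qd_mono hmem hirr (show n0 + 2 ≤ n1 by omega)
        simpa using this
      have h3 : Qd α1 (n1 + 1) ≤ M := idx_spec hmem hM1
      have h4 : N/2 < Qd α1 (n0 + 2) := idx_gt hmem hirr hq0
      have h5 : Qd α1 (n0 + 3) = cfA α1 (n0 + 2) * Qd α1 (n0 + 2) + Qd α1 (n0 + 1) := rfl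
      have h6 : 2 ≤ cfA α1 (n0 + 2) := ha (n0 + 2) (by omega)
      have h7 : 1 ≤ Qd α1 (n0 + 1) := Qd_one_le hmem hirr n0
      have h8 : 2 * Qd α1 (n0+2) ≤ cfA α1 (n0+2) * Qd α1 (n0+2) :=
        Nat.mul_le_mul_right _ h6
      omega
    -- the nearest neighbor index is a genuine minimizer
    have hTne : ((Finset.Icc 1 N).erase i).Nonempty := by
      rcases eq_or_ne i 1 with rfl | hne
      · exact ⟨2, by rw [Finset.mem_erase, Finset.mem_Icc]; omega⟩
      · exact ⟨1, by rw [Finset.mem_erase, Finset.mem_Icc]; omega⟩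
    obtain ⟨jm, hjmT, hjmin⟩ :=
      Finset.exists_min_image ((Finset.Icc 1 N).erase i) (fun j => kronDist q α i j) hTne
    rw [Finset.mem_erase] at hjmT
    have hjmS : jm ∈ {j : ℕ | j ∈ Finset.Icc 1 N ∧ j ≠ i ∧
        ∀ m ∈ Finset.Icc 1 N, m ≠ i → kronDist q α i j ≤ kronDist q α i m} := by
      refine ⟨hjmT.2, hjmT.1, fun m hm hmne => ?_⟩
      exact hjmin m (Finset.mem_erase.mpr ⟨hmne, hm⟩)
    have hbdd : BddAbove {j : ℕ | j ∈ Finset.Icc 1 N ∧ j ≠ i ∧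
        ∀ m ∈ Finset.Icc 1 N, m ≠ i → kronDist q α i j ≤ kronDist q α i m} :=
      ⟨N, fun j hj => (Finset.mem_Icc.mp hj.1).2⟩
    have hnn : nnIndex q α N i ∈ {j : ℕ | j ∈ Finset.Icc 1 N ∧ j ≠ i ∧
        ∀ m ∈ Finset.Icc 1 N, m ≠ i → kronDist q α i j ≤ kronDist q α i m} := by
      rw [nnIndex]
      exact Nat.sSup_mem ⟨jm, hjmS⟩ hbdd
    obtain ⟨hjIcc, hjne, hjmin'⟩ := hnn
    set j := nnIndex q α N i with hj
    rw [Finset.mem_Icc] at hjIcc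
    have hddef : Nat.dist i j = (i - j) + (j - i) := rfl
    have hd1 : 1 ≤ Nat.dist i j := by
      have hne : i ≠ j := fun h => hjne h.symm
      omega
    have hdM : Nat.dist i j ≤ M := by
      rcases le_or_gt j i with h | h
      · exact le_trans (by omega) (le_max_left _ _)
      · exact le_trans (by omega) (le_max_right _ _)
    have key1 : Bb α1 (n1 + 1) ≤ nint ((Nat.dist i j : ℝ) * α1) :=
      min_ge hmem hirr hM1 hd1 hdM
    set k0 := Qd α1 (n1 + 1) with hk0
    have hk01 : 1 ≤ k0 := Qd_one_le hmem hirr n1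
    have hk0M : k0 ≤ M := idx_spec hmem hM1
    have hnintk0 : nint ((k0 : ℝ) * α1) = Bb α1 (n1 + 1) := by
      have h := nint_Qd hmem hirr (n1 - 1)
      have hn1' : n1 - 1 + 2 = n1 + 1 := by omega
      rw [hn1'] at h
      exact h
    obtain ⟨m0, hm0Icc, hm0ne, hm0d⟩ :
        ∃ m0, m0 ∈ Finset.Icc 1 N ∧ m0 ≠ i ∧ Nat.dist i m0 = k0 := by
      rcases le_or_gt k0 (i - 1) with h | h
      · refine ⟨i - k0, ?_, by omega, ?_⟩
        · rw [Finset.mem_Icc]; omega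
        · have : Nat.dist i (i - k0) = (i - (i - k0)) + ((i - k0) - i) := rfl
          omega
      · have h' : k0 ≤ N - i := by
          have hle := le_max_iff.mp hk0M
          omega
        refine ⟨i + k0, ?_, by omega, ?_⟩
        · rw [Finset.mem_Icc]; omega
        · have : Nat.dist i (i + k0) = (i - (i + k0)) + ((i + k0) - i) := rfl
          omega
    have key2 : nint ((Nat.dist i j : ℝ) * α1) ≤ Bb α1 (n1 + 1) := by
      have hcmp := hjmin' m0 hm0Icc hm0ne
      rw [hα, kronDist_eq q hq α1 i j, kronDist_eq q hq α1 i m0, hm0d, hnintk0, ← hK] at hcmp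
      exact le_of_mul_le_mul_left hcmp hKpos
    refine ⟨n1, ⟨hlow, hhigh⟩, ?_⟩
    rw [hα, kronDist_eq q hq α1 i j, ← hK, le_antisymm key2 key1]
  constructor
  · apply Finset.card_pos.mpr
    exact Finset.Nonempty.image ⟨1, Finset.mem_Icc.mpr (by omega)⟩ _
  · have hsub : (Finset.Icc 1 N).image (fun i => kronDist q α i (nnIndex q α N i)) ⊆
        {K * Bb α1 (n0+1), K * Bb α1 (n0+2)} := by
      intro x hx
      rw [Finset.mem_image] at hx
      obtain ⟨i, hi, rfl⟩ := hx
      obtain ⟨nn1, ⟨hl, hh⟩, hval⟩ := main i hi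
      rw [hval]
      have hcase : nn1 = n0 ∨ nn1 = n0 + 1 := by omega
      rcases hcase with rfl | rfl
      · exact Finset.mem_insert_self _ _
      · rw [Finset.mem_insert, Finset.mem_singleton]
        right
        norm_num
    calc ((Finset.Icc 1 N).image (fun i => kronDist q α i (nnIndex q α N i))).card
        ≤ ({K * Bb α1 (n0+1), K * Bb α1 (n0+2)} : Finset ℝ).card :=
          Finset.card_le_card hsub
    _ ≤ 2 := le_trans (Finset.card_insert_le _ _) (by simp)
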